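/- Let a, b, c ≥ 3 be integers such that at least one of a, b, c is not divisible by 4. Then either the ternary quadratic form Q(X,Y,Z) = (a−2)X² + (b−2)Y² + (c−2)Z² is isotropic over ℚ_2 (i.e., there is a nonzero v ∈ ℚ_2³ with Q(v) = 0), or there exists a constant C ∈ ℕ such that for every n ∈ ℕ the 2-adic valuation of l_n + v_{a,b,c} is at most C. -/

import Mathlib

lemma sq_padic {u : ℤ} (hu : u % 8 = 1) : ∃ s : ℚ_[2], s ≠ 0 ∧ s ^ 2 = (u : ℚ_[2]) := by
  have h8 : ((2:ℤ)^3) ∣ 1 - u := by omega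
  have hu0 : u ≠ 0 := by omega
  set F : Polynomial ℤ_[2] := Polynomial.X ^ 2 - Polynomial.C (u : ℤ_[2]) with hF
  have heval : F.eval 1 = ((1 - u : ℤ) : ℤ_[2]) := by
    simp [hF]
  have hder : F.derivative.eval 1 = 2 := by
    simp [hF]
    norm_num
  have hnorm : ‖F.eval 1‖ < ‖F.derivative.eval 1‖ ^ 2 := by
    rw [heval, hder]
    have h1 : ‖((1 - u : ℤ) : ℤ_[2])‖ ≤ (2:ℝ) ^ (-(3:ℕ) : ℤ) :=
      PadicInt.norm_int_le_pow_iff_dvd.2 h8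
    have h2 : ‖(2 : ℤ_[2])‖ = 2⁻¹ := by
      have := PadicInt.norm_p (p := 2)
      simpa using this
    rw [h2]
    calc ‖((1 - u : ℤ) : ℤ_[2])‖ ≤ (2:ℝ) ^ (-(3:ℕ) : ℤ) := h1
      _ < (2⁻¹)^2 := by norm_num
  obtain ⟨z, hz, -⟩ := hensels_lemma hnorm
  have hz2 : z ^ 2 = (u : ℤ_[2]) := by
    have := hz
    simp [hF, sub_eq_zero] at this
    exact this
  have hzne : z ≠ 0 := by
    intro h
    rw [h] at hz2
    have : ((u:ℤ) : ℤ_[2]) = ((0:ℤ) : ℤ_[2]) := by simpa using hz2.symm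
    exact hu0 (Int.cast_injective this)
  refine ⟨(z : ℚ_[2]), ?_, ?_⟩
  · exact PadicInt.coe_ne_zero.2 hzne
  · have : ((z ^ 2 : ℤ_[2]) : ℚ_[2]) = ((u : ℤ_[2]) : ℚ_[2]) := by rw [hz2]
    push_cast at this
    simpa using this

lemma slotX (α β γ x y z w' : ℤ) (j : ℕ) (hα : α ≠ 0) (hodd : w' % 2 = 1)
    (hw : α * x = 2 ^ j * w')
    (hdvd : (2:ℤ) ^ (2*j+3) ∣ α * x ^ 2 + β * y ^ 2 + γ * z ^ 2) :
    ∃ X : ℚ_[2], X ≠ 0 ∧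
      (α : ℚ_[2]) * X ^ 2 + (β : ℚ_[2]) * (y : ℚ_[2]) ^ 2 + (γ : ℚ_[2]) * (z : ℚ_[2]) ^ 2 = 0 := by
  obtain ⟨t, ht⟩ := hdvd
  set u : ℤ := w' ^ 2 - 8 * (α * t) with hu_def
  obtain ⟨k, hk⟩ : ∃ k, w' = 2 * k + 1 := ⟨w' / 2, by omega⟩
  obtain ⟨m, hm⟩ : Even (k * (k + 1)) := Int.even_mul_succ_self k
  have hw2 : w' ^ 2 = 8 * m + 1 := by rw [hk]; linear_combination 4 * hm
  have hu : u % 8 = 1 := by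
    have : u = 8 * (m - α * t) + 1 := by rw [hu_def, hw2]; ring
    omega
  obtain ⟨s, hs0, hs2⟩ := sq_padic hu
  have key : (2:ℤ) ^ (2*j) * u = α ^ 2 * x ^ 2 - α * (α * x ^ 2 + β * y ^ 2 + γ * z ^ 2) := by
    rw [ht, hu_def]
    linear_combination (-(α * x + 2 ^ j * w')) * hw
  have keyQ : (2:ℚ_[2]) ^ (2*j) * (u:ℚ_[2])
      = (α:ℚ_[2]) ^ 2 * (x:ℚ_[2]) ^ 2
        - (α:ℚ_[2]) * ((α:ℚ_[2]) * (x:ℚ_[2]) ^ 2 + (β:ℚ_[2]) * (y:ℚ_[2]) ^ 2 + (γ:ℚ_[2]) * (z:ℚ_[2]) ^ 2) := by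
    exact_mod_cast key
  have hαQ : (α : ℚ_[2]) ≠ 0 := Int.cast_ne_zero.2 hα
  refine ⟨2 ^ j * s / α, div_ne_zero (mul_ne_zero (pow_ne_zero _ two_ne_zero) hs0) hαQ, ?_⟩
  field_simp
  linear_combination (2:ℚ_[2]) ^ (2*j) * hs2 + keyQ

lemma helper (α β γ : ℤ) (hα : 1 ≤ α) (hβ : 1 ≤ β) (hγ : 1 ≤ γ) (hα4 : α % 4 ≠ 2)
    (K : ℕ) (P' : ℤ) (hP' : P' % 2 = 1) (hfac : α * β * γ = 2 ^ K * P')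
    (hN : (2:ℤ) ^ (3 + K) ∣
      (α - 2) ^ 2 * β * γ + α * (β - 2) ^ 2 * γ + α * β * (γ - 2) ^ 2) :
    ∃ X Y Z : ℚ_[2], ¬(X = 0 ∧ Y = 0 ∧ Z = 0) ∧
      (α : ℚ_[2]) * X ^ 2 + (β : ℚ_[2]) * Y ^ 2 + (γ : ℚ_[2]) * Z ^ 2 = 0 := by
  obtain ⟨n', hn'⟩ := hN
  set x0 : ℤ := β * γ * (α - 2) with hx0
  set y0 : ℤ := α * γ * (β - 2) with hy0
  set z0 : ℤ := α * β * (γ - 2) with hz0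
  have hdq : α * x0 ^ 2 + β * y0 ^ 2 + γ * z0 ^ 2 = 2 ^ (2*K+3) * (P' * n') := by
    calc α * x0 ^ 2 + β * y0 ^ 2 + γ * z0 ^ 2
        = (α * β * γ) * ((α - 2) ^ 2 * β * γ + α * (β - 2) ^ 2 * γ + α * β * (γ - 2) ^ 2) := by
          rw [hx0, hy0, hz0]; ring
      _ = 2 ^ K * P' * (2 ^ (3+K) * n') := by rw [hfac, hn']
      _ = 2 ^ (2*K+3) * (P' * n') := by ring
  have hdvd : (2:ℤ) ^ (2*K+3) ∣ α * x0 ^ 2 + β * y0 ^ 2 + γ * z0 ^ 2 := ⟨P' * n', hdq⟩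
  have hα0 : α ≠ 0 := by omega
  rcases (by omega : α % 2 = 1 ∨ α % 4 = 0) with hodd | h4d
  · have hwodd : (P' * (α - 2)) % 2 = 1 := by
      have h1 : Odd (P' * (α - 2)) :=
        (Int.odd_iff.2 hP').mul (Int.odd_iff.2 (by omega))
      exact Int.odd_iff.1 h1
    have hw : α * x0 = 2 ^ K * (P' * (α - 2)) := by
      rw [hx0]; linear_combination (α - 2) * hfac
    obtain ⟨X, hX0, hXeq⟩ := slotX α β γ x0 y0 z0 (P' * (α - 2)) K hα0 hwodd hw hdvd
    exact ⟨X, (y0 : ℚ_[2]), (z0 : ℚ_[2]), fun h => hX0 h.1, hXeq⟩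
  · obtain ⟨α₀, hα₀⟩ : ∃ α₀, α = 4 * α₀ := ⟨α / 4, by omega⟩
    have hα₀0 : α₀ ≠ 0 := by omega
    have hwodd : (P' * (2 * α₀ - 1)) % 2 = 1 := by
      have h1 : Odd (P' * (2 * α₀ - 1)) :=
        (Int.odd_iff.2 hP').mul ⟨α₀ - 1, by ring⟩
      exact Int.odd_iff.1 h1
    have hw : α₀ * (2 * x0) = 2 ^ K * (P' * (2 * α₀ - 1)) := by
      rw [hx0]; linear_combination (2 * α₀ - 1) * hfac + β * γ * hα₀
    have hdvd' : (2:ℤ) ^ (2*K+3) ∣ α₀ * (2 * x0) ^ 2 + β * y0 ^ 2 + γ * z0 ^ 2 := by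
      have he : α₀ * (2 * x0) ^ 2 + β * y0 ^ 2 + γ * z0 ^ 2
          = α * x0 ^ 2 + β * y0 ^ 2 + γ * z0 ^ 2 := by
        rw [hα₀]; ring
      rw [he]; exact hdvd
    obtain ⟨X, hX0, hXeq⟩ := slotX α₀ β γ (2 * x0) y0 z0 (P' * (2 * α₀ - 1)) K hα₀0 hwodd hw hdvd'
    refine ⟨X / 2, (y0 : ℚ_[2]), (z0 : ℚ_[2]), fun h => ?_, ?_⟩
    · exact hX0 ((div_eq_zero_iff.1 h.1).resolve_right two_ne_zero)
    · have hcast : (α : ℚ_[2]) = 4 * (α₀ : ℚ_[2]) := by exact_mod_cast hα₀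
      linear_combination hXeq + (X ^ 2 / 4) * hcast

theorem stmt16 (a b c : ℤ) (ha : 3 ≤ a) (hb : 3 ≤ b) (hc : 3 ≤ c)
    (h4 : ¬(4 ∣ a) ∨ ¬(4 ∣ b) ∨ ¬(4 ∣ c)) :
    ∀ δ : ℕ, δ = (if 2 ∣ a ∧ 2 ∣ b ∧ 2 ∣ c then 2 else 0) →
    ∀ v : ℤ, v = ((a - 4) ^ 2 * (b - 2) * (c - 2) + (a - 2) * (b - 4) ^ 2 * (c - 2)
      + (a - 2) * (b - 2) * (c - 4) ^ 2) / 2 ^ δ →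
    (∃ X Y Z : ℚ_[2], ¬(X = 0 ∧ Y = 0 ∧ Z = 0) ∧
      ((a - 2 : ℤ) : ℚ_[2]) * X ^ 2 + ((b - 2 : ℤ) : ℚ_[2]) * Y ^ 2
        + ((c - 2 : ℤ) : ℚ_[2]) * Z ^ 2 = 0) ∨
    (∃ C : ℕ, ∀ n : ℕ,
      padicValInt 2 (2 ^ (3 - δ) * ((a - 2) * (b - 2) * (c - 2)) * (n : ℤ) + v) ≤ C) := by
  intro δ hδ v hv
  have hprod : (0:ℤ) < (a - 2) * (b - 2) * (c - 2) := mul_pos (mul_pos (by omega) (by omega)) (by omega)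
  obtain ⟨K, m, hmodd, hfacN⟩ :=
    Nat.exists_eq_two_pow_mul_odd (n := ((a - 2) * (b - 2) * (c - 2)).toNat) (by omega)
  have hfac : (a - 2) * (b - 2) * (c - 2) = 2 ^ K * (m : ℤ) := by
    have h1 : (((a - 2) * (b - 2) * (c - 2)).toNat : ℤ) = ((2 ^ K * m : ℕ) : ℤ) := by
      exact_mod_cast congrArg (Nat.cast : ℕ → ℤ) hfacN
    rw [Int.toNat_of_nonneg (by omega)] at h1
    push_cast at h1
    exact h1
  have hm1 : (m : ℤ) % 2 = 1 := by
    have := Nat.odd_iff.1 hmodd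
    omega
  by_cases hP : (2:ℤ) ^ (3 + K) ∣ ((a - 4) ^ 2 * (b - 2) * (c - 2)
      + (a - 2) * (b - 4) ^ 2 * (c - 2) + (a - 2) * (b - 2) * (c - 4) ^ 2)
  · left
    rcases h4 with h | h | h
    · have hh := helper (a - 2) (b - 2) (c - 2) (by omega) (by omega) (by omega) (by omega)
        K (m : ℤ) hm1 hfac (by
          have he : (a - 2 - 2) ^ 2 * (b - 2) * (c - 2) + (a - 2) * (b - 2 - 2) ^ 2 * (c - 2)
              + (a - 2) * (b - 2) * (c - 2 - 2) ^ 2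
              = (a - 4) ^ 2 * (b - 2) * (c - 2) + (a - 2) * (b - 4) ^ 2 * (c - 2)
              + (a - 2) * (b - 2) * (c - 4) ^ 2 := by ring
          rw [he]; exact hP)
      exact hh
    · obtain ⟨X, Y, Z, h0, heq⟩ := helper (b - 2) (a - 2) (c - 2) (by omega) (by omega)
        (by omega) (by omega) K (m : ℤ) hm1 (by linear_combination hfac) (by
          have he : (b - 2 - 2) ^ 2 * (a - 2) * (c - 2) + (b - 2) * (a - 2 - 2) ^ 2 * (c - 2)
              + (b - 2) * (a - 2) * (c - 2 - 2) ^ 2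
              = (a - 4) ^ 2 * (b - 2) * (c - 2) + (a - 2) * (b - 4) ^ 2 * (c - 2)
              + (a - 2) * (b - 2) * (c - 4) ^ 2 := by ring
          rw [he]; exact hP)
      exact ⟨Y, X, Z, by tauto, by linear_combination heq⟩
    · obtain ⟨X, Y, Z, h0, heq⟩ := helper (c - 2) (b - 2) (a - 2) (by omega) (by omega)
        (by omega) (by omega) K (m : ℤ) hm1 (by linear_combination hfac) (by
          have he : (c - 2 - 2) ^ 2 * (b - 2) * (a - 2) + (c - 2) * (b - 2 - 2) ^ 2 * (a - 2)
              + (c - 2) * (b - 2) * (a - 2 - 2) ^ 2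
              = (a - 4) ^ 2 * (b - 2) * (c - 2) + (a - 2) * (b - 4) ^ 2 * (c - 2)
              + (a - 2) * (b - 2) * (c - 4) ^ 2 := by ring
          rw [he]; exact hP)
      exact ⟨Z, Y, X, by tauto, by linear_combination heq⟩
  · right
    by_cases hall : 2 ∣ a ∧ 2 ∣ b ∧ 2 ∣ c
    · obtain rfl : δ = 2 := by rw [hδ, if_pos hall]
      refine ⟨1 + K, fun n => ?_⟩
      obtain ⟨a', ha'⟩ := hall.1
      obtain ⟨b', hb'⟩ := hall.2.1
      obtain ⟨c', hc'⟩ := hall.2.2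
      have h4E : (4:ℤ) ∣ ((a - 4) ^ 2 * (b - 2) * (c - 2) + (a - 2) * (b - 4) ^ 2 * (c - 2)
          + (a - 2) * (b - 2) * (c - 4) ^ 2) := by
        refine ⟨4 * ((a' - 2) ^ 2 * (b' - 1) * (c' - 1) + (a' - 1) * (b' - 2) ^ 2 * (c' - 1)
          + (a' - 1) * (b' - 1) * (c' - 2) ^ 2), ?_⟩
        rw [ha', hb', hc']; ring
      have h2v : (4:ℤ) * v = ((a - 4) ^ 2 * (b - 2) * (c - 2) + (a - 2) * (b - 4) ^ 2 * (c - 2)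
          + (a - 2) * (b - 2) * (c - 4) ^ 2) := by
        rw [hv]
        norm_num
        exact Int.mul_ediv_cancel' h4E
      have hnd : ¬ (2:ℤ) ^ (1 + K) ∣
          (2 ^ (3 - 2) * ((a - 2) * (b - 2) * (c - 2)) * (n : ℤ) + v) := by
        intro hdd
        have h1 : (2:ℤ) ^ (1 + K) ∣ 2 ^ (3 - 2) * ((a - 2) * (b - 2) * (c - 2)) * (n : ℤ) :=
          ⟨(m : ℤ) * n, by rw [hfac]; ring⟩
        have h2 : (2:ℤ) ^ (1 + K) ∣ v := (dvd_add_right h1).1 hdd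
        obtain ⟨w, hwv⟩ := h2
        exact hP ⟨w, by rw [← h2v, hwv]; ring⟩
      have hbound := (padicValInt_dvd_iff (p := 2) (1 + K)
        (2 ^ (3 - 2) * ((a - 2) * (b - 2) * (c - 2)) * (n : ℤ) + v))
      have hres := mt hbound.2 (by exact_mod_cast hnd)
      push_neg at hres
      omega
    · obtain rfl : δ = 0 := by rw [hδ, if_neg hall]
      refine ⟨3 + K, fun n => ?_⟩
      have h2v : v = ((a - 4) ^ 2 * (b - 2) * (c - 2) + (a - 2) * (b - 4) ^ 2 * (c - 2)
          + (a - 2) * (b - 2) * (c - 4) ^ 2) := by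
        rw [hv]; norm_num
      have hnd : ¬ (2:ℤ) ^ (3 + K) ∣
          (2 ^ (3 - 0) * ((a - 2) * (b - 2) * (c - 2)) * (n : ℤ) + v) := by
        intro hdd
        have h1 : (2:ℤ) ^ (3 + K) ∣ 2 ^ (3 - 0) * ((a - 2) * (b - 2) * (c - 2)) * (n : ℤ) :=
          ⟨(m : ℤ) * n, by rw [hfac]; ring⟩
        have h2 : (2:ℤ) ^ (3 + K) ∣ v := (dvd_add_right h1).1 hdd
        rw [h2v] at h2
        exact hP h2
      have hbound := (padicValInt_dvd_iff (p := 2) (3 + K)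
        (2 ^ (3 - 0) * ((a - 2) * (b - 2) * (c - 2)) * (n : ℤ) + v))
      have hres := mt hbound.2 (by exact_mod_cast hnd)
      push_neg at hres
      omega
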